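/- After-flag characterization of the decider: fix an assignment under which exactly l of B_j,...,B_{N−1} are true, and suppose l + c = k and i < j ≤ N. Then DecExt^j_{c,0} evaluates to the value A, and DecExt^j_{c,1} evaluates to the value C. -/

import Mathlib

/-- The decider nodes `DecExt^j_{c,b}` built from the Boolean values `B_0, …, B_{N-1}`,
with distinguished index `i`, target count `k`, and output values `A` (flag 0) and `C`
(flag 1):
`DecExt^j_{c,b} = DecExt^{j+1}_{c,b} ∨ (B_j ∧ DecExt^{j+1}_{c+1,b})` for `j < N`, `j ≠ i`;
`DecExt^i_{c,0} = DecExt^{i+1}_{c,0} ∨ (B_i ∧ DecExt^{i+1}_{c+1,1})`;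
`DecExt^N_{k,0} = A`, `DecExt^N_{k,1} = C`, `DecExt^N_{c,b} = 0` for `c ≠ k`. -/
def decExt (N i : ℕ) (k : ℤ) (A C : Bool) (B : ℕ → Bool) (j : ℕ) (c : ℤ) (b : Bool) : Bool :=
  if _h : j < N then
    if j = i ∧ b = false then
      decExt N i k A C B (j + 1) c false || (B i && decExt N i k A C B (j + 1) (c + 1) true)
    else
      decExt N i k A C B (j + 1) c b || (B j && decExt N i k A C B (j + 1) (c + 1) b)
  else if c = k then (if b then C else A) else false
termination_by N - j
decreasing_by all_goals omega

/-- The number of true values among `B_j, …, B_{N-1}`. -/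
def cnt (N : ℕ) (B : ℕ → Bool) (j : ℕ) : ℕ :=
  ((Finset.Ico j N).filter fun m => B m = true).card

lemma cnt_succ (N : ℕ) (B : ℕ → Bool) (j : ℕ) (h : j < N) :
    cnt N B j = (if B j then 1 else 0) + cnt N B (j + 1) := by
  unfold cnt
  rw [← Finset.insert_Ico_add_one_left_eq_Ico h, Finset.filter_insert]
  split <;> rename_i hb
  · rw [Finset.card_insert_of_notMem (by simp)]
    omega
  · simp [Nat.succ_eq_add_one]

lemma decExt_eq_false (N i : ℕ) (k : ℤ) (A C : Bool) (B : ℕ → Bool)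
    (j : ℕ) (c : ℤ) (b : Bool) (h : k < c ∨ c + (cnt N B j : ℤ) < k) :
    decExt N i k A C B j c b = false := by
  rw [decExt]
  by_cases hjN : j < N
  · have hc := cnt_succ N B j hjN
    by_cases hBj : B j = true
    · simp [hBj] at hc
      have h1 : decExt N i k A C B (j+1) c b = false :=
        decExt_eq_false N i k A C B (j+1) c b (by omega)
      have h2 : decExt N i k A C B (j+1) (c+1) b = false :=
        decExt_eq_false N i k A C B (j+1) (c+1) b (by omega)
      have h1' : decExt N i k A C B (j+1) c false = false :=
        decExt_eq_false N i k A C B (j+1) c false (by omega)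
      have h2' : decExt N i k A C B (j+1) (c+1) true = false :=
        decExt_eq_false N i k A C B (j+1) (c+1) true (by omega)
      simp [hjN, h1, h2, h1', h2']
    · simp [hBj] at hc
      have h1 : decExt N i k A C B (j+1) c b = false :=
        decExt_eq_false N i k A C B (j+1) c b (by omega)
      have h1' : decExt N i k A C B (j+1) c false = false :=
        decExt_eq_false N i k A C B (j+1) c false (by omega)
      simp only [Bool.not_eq_true] at hBj
      by_cases hji : j = i
      · subst hji
        simp [hjN, h1, h1', hBj]
      · simp [hjN, h1, h1', hBj, hji]
  · have : c ≠ k := by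
      unfold cnt at h
      simp [Finset.Ico_eq_empty (by omega : ¬ j < N)] at h
      omega
    simp [hjN, this]
termination_by N - j
decreasing_by all_goals omega

lemma decider_after_flag_aux (N i : ℕ) (k : ℤ) (A C : Bool) (B : ℕ → Bool)
    (j : ℕ) (hij : i < j) (hj : j ≤ N) (c : ℤ)
    (hlc : (cnt N B j : ℤ) + c = k) (b : Bool) :
    decExt N i k A C B j c b = (if b then C else A) := by
  rw [decExt]
  by_cases hjN : j < N
  · have hc := cnt_succ N B j hjN
    have hji : j ≠ i := by omega
    by_cases hBj : B j = true
    · simp [hBj] at hc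
      have ih := decider_after_flag_aux N i k A C B (j+1) (by omega) (by omega) (c+1)
        (by omega) b
      have h1 : decExt N i k A C B (j+1) c b = false :=
        decExt_eq_false N i k A C B (j+1) c b (by omega)
      simp [hjN, hji, h1, hBj, ih]
    · simp [hBj] at hc
      have ih := decider_after_flag_aux N i k A C B (j+1) (by omega) (by omega) c
        (by omega) b
      simp only [Bool.not_eq_true] at hBj
      simp [hjN, hji, hBj, ih]
  · have : c = k := by
      unfold cnt at hlc
      simp [Finset.Ico_eq_empty (by omega : ¬ j < N)] at hlc
      omega
    simp [hjN, this]
termination_by N - j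
decreasing_by all_goals omega

/-- After-flag characterization of the decider: if exactly `l` of `B_j, …, B_{N-1}` are
true, `l + c = k` and `i < j ≤ N`, then `DecExt^j_{c,0}` evaluates to `A` and
`DecExt^j_{c,1}` evaluates to `C`. -/
theorem decider_after_flag (N i : ℕ) (hi : i < N) (k : ℤ) (A C : Bool) (B : ℕ → Bool)
    (j : ℕ) (hij : i < j) (hj : j ≤ N) (l c : ℤ)
    (hl : (cnt N B j : ℤ) = l) (hlc : l + c = k) :
    decExt N i k A C B j c false = A ∧ decExt N i k A C B j c true = C := by
  exact ⟨decider_after_flag_aux N i k A C B j hij hj c (by omega) false,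
         decider_after_flag_aux N i k A C B j hij hj c (by omega) true⟩
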